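/- If s and a are rational numbers with L(s,a) = 0 and C(s,a) = 0, then s ∈ {1, -1} and a = 2. -/

import Mathlib

noncomputable section
open Polynomial

def uu (s a : ℚ) : ℚ :=
  -3*a^2 + (12 - 4*s^2 - 2*s)*a + (-s^4 + 14*s^3 - 4*s^2 - 10*s - 1)

def vv (s a : ℚ) : ℚ :=
  a^4 + (2*s^2 + s - 6)*a^3 + (s^4 - 14*s^3 + 4*s^2 + 10*s + 1)*a^2
    + (s^5 + 10*s^4 + 4*s^3 - 14*s^2 + s)*a + (-6*s^5 + s^4 + 2*s^3)

def mm (s a : ℚ) : ℚ := -2*a - 2*s^2 - s + 6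

def nn (s a : ℚ) : ℚ :=
  a^3 + (2*s^2 + s - 6)*a^2 + (s^4 - 14*s^3 + 4*s^2 + 10*s + 1)*a
    + (s^5 + 10*s^4 + 4*s^3 - 14*s^2 + s)

def LL (s a : ℚ) : ℚ := nn s a - mm s a * uu s a

def CC (s a : ℚ) : ℚ := mm s a * vv s a + s^5

def FF (s a : ℚ) : ℚ :=
  CC s a ^ 2 + uu s a * LL s a * CC s a + vv s a * LL s a ^ 2


lemma noRoot13 : ∀ P Q : ZMod 13, (P ≠ 0 ∨ Q ≠ 0) →
    (12)*Q^21 + (8)*P^1*Q^20 + (10)*P^2*Q^19 + (7)*P^3*Q^18 + (10)*P^4*Q^17 + (4)*P^5*Q^16 + (4)*P^6*Q^15 + (7)*P^7*Q^14 + (10)*P^8*Q^13 + (1)*P^9*Q^12 + (9)*P^10*Q^11 + (3)*P^11*Q^10 + (4)*P^12*Q^9 + (7)*P^13*Q^8 + (3)*P^14*Q^7 + (4)*P^15*Q^6 + (2)*P^16*Q^5 + (6)*P^17*Q^4 + (9)*P^18*Q^3 + (0)*P^19*Q^2 + (4)*P^20*Q^1 + (5)*P^21 ≠ 0 := by dec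ide

set_option maxRecDepth 10000 in
theorem stmt12 (s a : ℚ) (hL : LL s a = 0) (hC : CC s a = 0) :
    (s = 1 ∨ s = -1) ∧ a = 2 := by
  simp only [LL, _root_.CC, nn, mm, uu, vv] at hL hC
  have h2 : (s-1)^3 * ((s+1)^3 * ((-110592:ℚ) + (-5345280:ℚ)*s^1 + (7745280:ℚ)*s^2 + (231674112:ℚ)*s^3 + (-1276740780:ℚ)*s^4 + (2603612444:ℚ)*s^5 + (-1048464803:ℚ)*s^6 + (-5021608234:ℚ)*s^7 + (9219354518:ℚ)*s^8 + (-3706299882:ℚ)*s^9 + (-6526416706:ℚ)*s^10 + (8848608460:ℚ)*s^11 + (-2266872188:ℚ)*s^12 + (-3001419440:ℚ)*s^13 + (2381234573:ℚ)*s^14 + (-96206522:ℚ)*s^15 + (-516056006:ℚ)*s^16 + (164061982:ℚ)*s^17 + (25552432:ℚ)*s^18 + (-17845256:ℚ)*s^19 + (1573888:ℚ)*s^20 + (-32768:ℚ)*s^21)) = 0 := by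
    linear_combination ((18432:ℚ) + (224256:ℚ)*a^1 + (-2852048:ℚ)*a^2 + (1394016:ℚ)*a^3 + (-156368:ℚ)*a^4 + (706560:ℚ)*s^1 + (841008:ℚ)*s^1*a^1 + (13924424:ℚ)*s^1*a^2 + (-6892872:ℚ)*s^1*a^3 + (731584:ℚ)*s^1*a^4 + (-8405632:ℚ)*s^2 + (-5792632:ℚ)*s^2*a^1 + ((-29595417:ℚ)/2)*s^2*a^2 + (7819327:ℚ)*s^2*a^3 + ((-1482809:ℚ)/2)*s^2*a^4 + (32386528:ℚ)*s^3 + ((-7153609:ℚ)/2)*s^3*a^1 + ((-123537315:ℚ)/4)*s^3*a^2 + ((57225697:ℚ)/4)*s^3*a^3 + ((-3051793:ℚ)/2)*s^3*a^4 + (-43219086:ℚ)*s^4 + ((193501673:ℚ)/4)*s^4*a^1 + ((554491195:ℚ)/8)*s^4*a^2 + (-36213273:ℚ)*s^4*a^3 + ((26946879:ℚ)/8)*s^4*a^4 + (-41979751:ℚ)*s^5 + ((-367117299:ℚ)/8)*s^5*a^1 + ((118432927:ℚ)/16)*s^5*a^2 + ((47623101:ℚ)/16)*s^5*a^3 + ((34845:ℚ)/2)*s^5*a^4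 + ((381872929:ℚ)/2)*s^6 + ((-1512582453:ℚ)/16)*s^6*a^1 + ((-1628968193:ℚ)/16)*s^6*a^2 + ((99833859:ℚ)/2)*s^6*a^3 + (-4361307:ℚ)*s^6*a^4 + ((-588734893:ℚ)/4)*s^7 + ((1365652363:ℚ)/8)*s^7*a^1 + ((469190143:ℚ)/16)*s^7*a^2 + ((-58737655:ℚ)/2)*s^7*a^3 + (2132240:ℚ)*s^7*a^4 + ((-683282939:ℚ)/4)*s^8 + ((598964627:ℚ)/16)*s^8*a^1 + ((660461775:ℚ)/8)*s^8*a^2 + ((-59736447:ℚ)/2)*s^8*a^3 + ((9347565:ℚ)/4)*s^8*a^4 + ((1401221043:ℚ)/4)*s^9 + ((-1796187093:ℚ)/8)*s^9*a^1 + ((-256280371:ℚ)/8)*s^9*a^2 + ((233293191:ℚ)/8)*s^9*a^3 + (-1912324:ℚ)*s^9*a^4 + (-92360822:ℚ)*s^10 + ((504338669:ℚ)/8)*s^10*a^1 + ((-412117067:ℚ)/8)*s^10*a^2 + ((14621353:ℚ)/2)*s^10*a^3 + (-425783:ℚ)*s^10*a^4 + ((-471579175:ℚ)/2)*s^11 +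 ((565050461:ℚ)/4)*s^11*a^1 + ((163885233:ℚ)/8)*s^11*a^2 + ((-25009163:ℚ)/2)*s^11*a^3 + ((1196737:ℚ)/2)*s^11*a^4 + ((427261247:ℚ)/2)*s^12 + ((-608747159:ℚ)/8)*s^12*a^1 + ((199371599:ℚ)/8)*s^12*a^2 + ((-618293:ℚ)/2)*s^12*a^3 + ((-101025:ℚ)/8)*s^12*a^4 + ((15006873:ℚ)/2)*s^13 + ((-377276281:ℚ)/8)*s^13*a^1 + ((-184050141:ℚ)/16)*s^13*a^2 + ((40464285:ℚ)/16)*s^13*a^3 + ((-83013:ℚ)/2)*s^13*a^4 + ((-202804353:ℚ)/2)*s^14 + ((566293303:ℚ)/16)*s^14*a^1 + ((-95306305:ℚ)/16)*s^14*a^2 + (-33289:ℚ)*s^14*a^3 + ((-15553:ℚ)/2)*s^14*a^4 + ((191676511:ℚ)/4)*s^15 + ((69258059:ℚ)/8)*s^15*a^1 + ((55201675:ℚ)/16)*s^15*a^2 + ((-829623:ℚ)/4)*s^15*a^3 + (96:ℚ)*s^15*a^4 + ((35580685:ℚ)/4)*s^16 + ((-143018985:ℚ)/16)*s^16*a^1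 + ((1216827:ℚ)/8)*s^16*a^2 + (-16977:ℚ)*s^16*a^3 + ((-60763593:ℚ)/4)*s^17 + ((-1883943:ℚ)/8)*s^17*a^1 + ((-656943:ℚ)/4)*s^17*a^2 + (192:ℚ)*s^17*a^3 + (3285936:ℚ)*s^18 + ((3561441:ℚ)/4)*s^18*a^1 + ((-22305:ℚ)/2)*s^18*a^2 + (1306695:ℚ)*s^19 + ((-165153:ℚ)/2)*s^19*a^1 + (96:ℚ)*s^19*a^2 + (-558144:ℚ)*s^20 + (96:ℚ)*s^20*a^1 + (16384:ℚ)*s^21) * hL + ((5469904:ℚ) + (-2781384:ℚ)*a^1 + (390920:ℚ)*a^2 + (-29098576:ℚ)*s^1 + (13822776:ℚ)*s^1*a^1 + (-1828960:ℚ)*s^1*a^2 + ((77031129:ℚ)/2)*s^2 + ((-63591445:ℚ)/4)*s^2*a^1 + ((7414045:ℚ)/4)*s^2*a^2 + ((112519203:ℚ)/2)*s^3 + ((-113432815:ℚ)/4)*s^3*a^1 + ((15258965:ℚ)/4)*s^3*a^2 + ((-1419430131:ℚ)/8)*s^4 + ((1169904543:ℚ)/16)*s^4*a^1 + ((-134734395:ℚ)/16)*s^4*a^2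 + ((175850315:ℚ)/4)*s^5 + ((-58256685:ℚ)/8)*s^5*a^1 + ((-174225:ℚ)/4)*s^5*a^2 + ((501830863:ℚ)/2)*s^6 + ((-1601613369:ℚ)/16)*s^6*a^1 + ((21806535:ℚ)/2)*s^6*a^2 + ((-793977201:ℚ)/4)*s^7 + ((242328569:ℚ)/4)*s^7*a^1 + (-5330600:ℚ)*s^7*a^2 + ((-1210452841:ℚ)/8)*s^8 + ((473694141:ℚ)/8)*s^8*a^1 + ((-46737825:ℚ)/8)*s^8*a^2 + (207418815:ℚ)*s^9 + ((-237390543:ℚ)/4)*s^9*a^1 + (4780810:ℚ)*s^9*a^2 + (32293624:ℚ)*s^10 + ((-114316591:ℚ)/8)*s^10*a^1 + ((2128915:ℚ)/2)*s^10*a^2 + (-106950837:ℚ)*s^11 + ((101523889:ℚ)/4)*s^11*a^1 + ((-5983685:ℚ)/4)*s^11*a^2 + ((32444835:ℚ)/8)*s^12 + ((10236715:ℚ)/16)*s^12*a^1 + ((505125:ℚ)/16)*s^12*a^2 + ((129350283:ℚ)/4)*s^13 + ((-41981469:ℚ)/8)*s^13*a^1 + ((415065:ℚ)/4)*s^13*a^2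 + ((-6254373:ℚ)/2)*s^14 + ((1090315:ℚ)/16)*s^14*a^1 + ((77765:ℚ)/4)*s^14*a^2 + ((-23322113:ℚ)/4)*s^15 + ((1799961:ℚ)/4)*s^15*a^1 + (-240:ℚ)*s^15*a^2 + ((4810089:ℚ)/8)*s^16 + ((123399:ℚ)/4)*s^16*a^1 + ((791607:ℚ)/2)*s^17 + (-336:ℚ)*s^17*a^1 + ((22401:ℚ)/2)*s^18 + (-96:ℚ)*s^19) * hC
  have hs : s = 1 ∨ s = -1 := by
    rcases mul_eq_zero.mp h2 with h | h2
    · left; have := pow_eq_zero_iff (n := 3) (by norm_num) |>.mp h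
      linarith [sub_eq_zero.mp this]
    rcases mul_eq_zero.mp h2 with h | hK
    · right; have := pow_eq_zero_iff (n := 3) (by norm_num) |>.mp h
      linarith
    · exfalso
      set p : ℤ := s.num with hp
      set q : ℤ := (s.den : ℤ) with hq
      have hden : (s.den : ℚ) ≠ 0 := by exact_mod_cast s.den_ne_zero
      have hnum : ((s.num : ℤ) : ℚ) = s * (s.den : ℚ) := by
        exact_mod_cast (div_eq_iff hden).mp (Rat.num_div_den s)
      have h4 : ((-110592)*q^21 + (-5345280)*p^1*q^20 + (7745280)*p^2*q^19 + (231674112)*p^3*q^18 + (-1276740780)*p^4*q^17 + (2603612444)*p^5*q^16 + (-1048464803)*p^6*q^15 + (-5021608234)*p^7*q^14 + (9219354518)*p^8*q^13 + (-3706299882)*p^9*q^12 + (-6526416706)*p^10*q^11 + (8848608460)*p^11*q^10 + (-2266872188)*p^12*q^9 + (-3001419440)*p^13*q^8 + (2381234573)*p^14*q^7 + (-96206522)*p^15*q^6 + (-516056006)*p^16*q^5 + (164061982)*p^17*q^4 + (25552432)*p^18*q^3 + (-17845256)*p^19*q^2 + (1573888)*p^20*q^1 + (-32768)*p^21) = (0:ℤ)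 := by
        have h4q : (((-110592)*q^21 + (-5345280)*p^1*q^20 + (7745280)*p^2*q^19 + (231674112)*p^3*q^18 + (-1276740780)*p^4*q^17 + (2603612444)*p^5*q^16 + (-1048464803)*p^6*q^15 + (-5021608234)*p^7*q^14 + (9219354518)*p^8*q^13 + (-3706299882)*p^9*q^12 + (-6526416706)*p^10*q^11 + (8848608460)*p^11*q^10 + (-2266872188)*p^12*q^9 + (-3001419440)*p^13*q^8 + (2381234573)*p^14*q^7 + (-96206522)*p^15*q^6 + (-516056006)*p^16*q^5 + (164061982)*p^17*q^4 + (25552432)*p^18*q^3 + (-17845256)*p^19*q^2 + (1573888)*p^20*q^1 + (-32768)*p^21 : ℤ) : ℚ) = 0 := by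
          rw [hp, hq]
          push_cast
          rw [hnum]
          linear_combination ((s.den:ℚ))^21 * hK
        exact_mod_cast h4q
      have h5 : ((12)*((q : ZMod 13))^21 + (8)*((p : ZMod 13))^1*((q : ZMod 13))^20 + (10)*((p : ZMod 13))^2*((q : ZMod 13))^19 + (7)*((p : ZMod 13))^3*((q : ZMod 13))^18 + (10)*((p : ZMod 13))^4*((q : ZMod 13))^17 + (4)*((p : ZMod 13))^5*((q : ZMod 13))^16 + (4)*((p : ZMod 13))^6*((q : ZMod 13))^15 + (7)*((p : ZMod 13))^7*((q : ZMod 13))^14 + (10)*((p : ZMod 13))^8*((q : ZMod 13))^13 + (1)*((p : ZMod 13))^9*((q : ZMod 13))^12 + (9)*((p : ZMod 13))^10*((q : ZMod 13))^11 + (3)*((p : ZMod 13))^11*((q : ZMod 13))^10 + (4)*((p : ZMod 13))^12*((q : ZMod 13))^9 + (7)*((p : ZMod 13))^13*((q : ZMod 13))^8 + (3)*((p : ZMod 13))^14*((q : ZMod 13))^7 + (4)*((p : ZMod 13))^15*((q : ZMod 13))^6 + (2)*((p : ZMod 13))^16*((q : ZMod 13))^5 + (6)*((p : ZMod 13))^17*((q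 : ZMod 13))^4 + (9)*((p : ZMod 13))^18*((q : ZMod 13))^3 + (0)*((p : ZMod 13))^19*((q : ZMod 13))^2 + (4)*((p : ZMod 13))^20*((q : ZMod 13))^1 + (5)*((p : ZMod 13))^21) = (0 : ZMod 13) := by
        have := congrArg (Int.cast : ℤ → ZMod 13) h4
        push_cast at this
        convert this using 2 <;> norm_num <;> ring_nf <;> reduce_mod_char <;> ring_nf <;> reduce_mod_char
      have hPQ : ((p : ZMod 13) ≠ 0 ∨ (q : ZMod 13) ≠ 0) := by
        by_cases hQ : (q : ZMod 13) = 0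
        · left
          intro hP
          have h13q : (13:ℤ) ∣ q := (ZMod.intCast_zmod_eq_zero_iff_dvd q 13).mp hQ
          have h13p : (13:ℤ) ∣ p := (ZMod.intCast_zmod_eq_zero_iff_dvd p 13).mp hP
          have hd1 : (13:ℕ) ∣ s.num.natAbs := by
            have := Int.natAbs_dvd_natAbs.mpr (hp ▸ h13p); simpa using this
          have hd2 : (13:ℕ) ∣ s.den := by
            have := Int.natAbs_dvd_natAbs.mpr (hq ▸ h13q); simpa using this
          have hdg : (13:ℕ) ∣ Nat.gcd s.num.natAbs s.den := Nat.dvd_gcd hd1 hd2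
          have hg : Nat.gcd s.num.natAbs s.den = 1 := s.reduced
          omega
        · right; exact hQ
      exact noRoot13 _ _ hPQ h5
  refine ⟨hs, ?_⟩
  rcases hs with h1 | h1
  · subst h1
    linear_combination ((-49:ℚ)/32 + (3:ℚ)/32*a + (19:ℚ)/16*a^2 - (3:ℚ)/4*a^3) * hL
      + ((-41:ℚ)/32 + (15:ℚ)/8*a) * hC
  · subst h1
    have h3 : (a - 2)^3 = 0 := by linear_combination ((-1:ℚ)/5) * hL
    have := pow_eq_zero_iff (n := 3) (by norm_num) |>.mp h3
    linarith [sub_eq_zero.mp this]
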